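/- (Type TL₁) For α ∈ ℂ with α ≠ 0, let A(α) = ℂ⟨x,y,z⟩/(xy − αyx, xz − α⁻¹zx, α⁻¹zy − αyz + x²). For α, α' ∈ ℂ both nonzero, the algebras A(α) and A(α') are isomorphic as graded algebras if and only if α' = α or α' = α⁻¹. -/

import Mathlib

set_option maxHeartbeats 1600000
noncomputable section

/-- The free algebra `ℂ⟨x,y,z⟩`. -/
abbrev F3 : Type := FreeAlgebra ℂ (Fin 3)

def X : F3 := FreeAlgebra.ι ℂ 0
def Y : F3 := FreeAlgebra.ι ℂ 1
def Z : F3 := FreeAlgebra.ι ℂ 2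

/-- The relation identifying the three relators with `0`. -/
def rel3 (f₁ f₂ f₃ : F3) : F3 → F3 → Prop :=
  fun a b => (a = f₁ ∨ a = f₂ ∨ a = f₃) ∧ b = 0

/-- `ℂ⟨x,y,z⟩/(f₁,f₂,f₃)`, the quotient by the two-sided ideal generated by `f₁,f₂,f₃`. -/
abbrev QuadAlg (f₁ f₂ f₃ : F3) : Type := RingQuot (rel3 f₁ f₂ f₃)

/-- The linear span of the images of `x, y, z` in the quotient. -/
def genSpan (f₁ f₂ f₃ : F3) : Submodule ℂ (QuadAlg f₁ f₂ f₃) :=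
  Submodule.span ℂ {RingQuot.mkAlgHom ℂ (rel3 f₁ f₂ f₃) X,
                    RingQuot.mkAlgHom ℂ (rel3 f₁ f₂ f₃) Y,
                    RingQuot.mkAlgHom ℂ (rel3 f₁ f₂ f₃) Z}

/-- Isomorphism of graded algebras: a `ℂ`-algebra isomorphism carrying the span of
the images of `x,y,z` onto the span of the images of `x,y,z`. -/
def GrIso (f₁ f₂ f₃ g₁ g₂ g₃ : F3) : Prop :=
  ∃ e : QuadAlg f₁ f₂ f₃ ≃ₐ[ℂ] QuadAlg g₁ g₂ g₃,
    Submodule.map e.toLinearMap (genSpan f₁ f₂ f₃) = genSpan g₁ g₂ g₃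

def qm (p : ℂ) (v w : Fin 3 → ℂ) : Fin 6 → ℂ
  | 0 => v 0 * w 1 + p⁻¹ * (v 1 * w 0)
  | 1 => v 0 * w 2 + p * (v 2 * w 0)
  | 2 => v 1 * w 1
  | 3 => v 1 * w 2 + p * (v 0 * w 0)
  | 4 => v 2 * w 1 - p⁻¹ * (v 0 * w 0)
  | 5 => v 2 * w 2

def T (_p : ℂ) : Type := ℂ × (Fin 3 → ℂ) × (Fin 6 → ℂ)

namespace T

variable {p : ℂ}

instance : AddCommGroup (T p) :=
  inferInstanceAs (AddCommGroup (ℂ × (Fin 3 → ℂ) × (Fin 6 → ℂ)))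
instance : Module ℂ (T p) :=
  inferInstanceAs (Module ℂ (ℂ × (Fin 3 → ℂ) × (Fin 6 → ℂ)))

def mk' (a : ℂ) (v : Fin 3 → ℂ) (w : Fin 6 → ℂ) : T p := (a, v, w)

def con (t : T p) : ℂ := t.1
def lin (t : T p) : Fin 3 → ℂ := t.2.1
def quad (t : T p) : Fin 6 → ℂ := t.2.2

@[simp] lemma con_mk' (a v w) : con (mk' (p := p) a v w) = a := rfl
@[simp] lemma lin_mk' (a v w) : lin (mk' (p := p) a v w) = v := rfl
@[simp] lemma quad_mk' (a v w) : quad (mk' (p := p) a v w) = w := rfl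

@[simp] lemma con_add (s t : T p) : con (s + t) = con s + con t := rfl
@[simp] lemma lin_add (s t : T p) : lin (s + t) = lin s + lin t := rfl
@[simp] lemma quad_add (s t : T p) : quad (s + t) = quad s + quad t := rfl
@[simp] lemma con_smul (c : ℂ) (t : T p) : con (c • t) = c * con t := rfl
@[simp] lemma lin_smul (c : ℂ) (t : T p) : lin (c • t) = c • lin t := rfl
@[simp] lemma quad_smul (c : ℂ) (t : T p) : quad (c • t) = c • quad t := rfl
@[simp] lemma con_neg (t : T p) : con (-t) = -con t := rfl
@[simp] lemma lin_neg (t : T p) : lin (-t) = -lin t := rfl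
@[simp] lemma quad_neg (t : T p) : quad (-t) = -quad t := rfl
@[simp] lemma con_sub (s t : T p) : con (s - t) = con s - con t := rfl
@[simp] lemma lin_sub (s t : T p) : lin (s - t) = lin s - lin t := rfl
@[simp] lemma quad_sub (s t : T p) : quad (s - t) = quad s - quad t := rfl
@[simp] lemma con_zero : con (0 : T p) = 0 := rfl
@[simp] lemma lin_zero : lin (0 : T p) = 0 := rfl
@[simp] lemma quad_zero : quad (0 : T p) = 0 := rfl

lemma ext {s t : T p} (h1 : con s = con t) (h2 : lin s = lin t)
    (h3 : quad s = quad t) : s = t := by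
  obtain ⟨a, b, c⟩ := s
  obtain ⟨a', b', c'⟩ := t
  simp only [con, lin, quad] at h1 h2 h3
  subst h1 h2 h3
  rfl

def tmul (s t : T p) : T p :=
  (s.1 * t.1, s.1 • t.2.1 + t.1 • s.2.1, s.1 • t.2.2 + t.1 • s.2.2 + qm p s.2.1 t.2.1)

@[simp] lemma con_tmul (s t : T p) : con (tmul s t) = con s * con t := rfl
@[simp] lemma lin_tmul (s t : T p) :
    lin (tmul s t) = con s • lin t + con t • lin s := rfl
@[simp] lemma quad_tmul (s t : T p) :
    quad (tmul s t) = con s • quad t + con t • quad s + qm p (lin s) (lin t) := rfl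

instance : Ring (T p) where
  __ := (inferInstanceAs (AddCommGroup (T p)) : AddCommGroup (T p))
  mul := tmul
  one := mk' 1 0 0
  left_distrib s t u := by
    show tmul s (t + u) = tmul s t + tmul s u
    refine ext ?_ (funext fun i => ?_) (funext fun j => ?_)
    · simp; ring
    · simp; ring
    · fin_cases j <;> simp [qm] <;> ring
  right_distrib s t u := by
    show tmul (s + t) u = tmul s u + tmul t u
    refine ext ?_ (funext fun i => ?_) (funext fun j => ?_)
    · simp; ring
    · simp; ring
    · fin_cases j <;> simp [qm] <;> ring
  zero_mul t := by
    show tmul 0 t = 0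
    refine ext ?_ (funext fun i => ?_) (funext fun j => ?_)
    · simp
    · simp
    · fin_cases j <;> simp [qm]
  mul_zero t := by
    show tmul t 0 = 0
    refine ext ?_ (funext fun i => ?_) (funext fun j => ?_)
    · simp
    · simp
    · fin_cases j <;> simp [qm]
  mul_assoc s t u := by
    show tmul (tmul s t) u = tmul s (tmul t u)
    refine ext ?_ (funext fun i => ?_) (funext fun j => ?_)
    · simp; ring
    · simp; ring
    · fin_cases j <;> simp [qm] <;> ring
  one_mul t := by
    show tmul (mk' 1 0 0) t = t
    refine ext ?_ (funext fun i => ?_) (funext fun j => ?_)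
    · simp
    · simp
    · fin_cases j <;> simp [qm]
  mul_one t := by
    show tmul t (mk' 1 0 0) = t
    refine ext ?_ (funext fun i => ?_) (funext fun j => ?_)
    · simp
    · simp
    · fin_cases j <;> simp [qm]

lemma mul_def (s t : T p) : s * t = tmul s t := rfl
@[simp] lemma con_mul (s t : T p) : con (s * t) = con s * con t := rfl
@[simp] lemma lin_mul (s t : T p) :
    lin (s * t) = con s • lin t + con t • lin s := rfl
@[simp] lemma quad_mul (s t : T p) :
    quad (s * t) = con s • quad t + con t • quad s + qm p (lin s) (lin t) := rfl
@[simp] lemma con_one : con (1 : T p) = 1 := rfl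
@[simp] lemma lin_one : lin (1 : T p) = 0 := rfl
@[simp] lemma quad_one : quad (1 : T p) = 0 := rfl

instance : Algebra ℂ (T p) where
  smul := (· • ·)
  algebraMap :=
  { toFun c := mk' c 0 0
    map_one' := rfl
    map_mul' c c' := by
      refine (ext ?_ (funext fun i => ?_) (funext fun j => ?_)).symm
      · simp
      · simp
      · fin_cases j <;> simp [qm]
    map_zero' := by
      refine ext ?_ ?_ ?_ <;> simp
    map_add' c c' := by
      refine (ext ?_ ?_ ?_).symm <;> simp }
  commutes' c t := by
    refine ext ?_ (funext fun i => ?_) (funext fun j => ?_)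
    · simp [mul_comm]
    · simp [mul_comm]
    · fin_cases j <;> simp [qm] <;> ring
  smul_def' c t := by
    refine ext ?_ (funext fun i => ?_) (funext fun j => ?_)
    · simp
    · simp
    · fin_cases j <;> simp [qm]

@[simp] lemma con_algebraMap (c : ℂ) : con (algebraMap ℂ (T p) c) = c := rfl
@[simp] lemma lin_algebraMap (c : ℂ) : lin (algebraMap ℂ (T p) c) = 0 := rfl
@[simp] lemma quad_algebraMap (c : ℂ) : quad (algebraMap ℂ (T p) c) = 0 := rfl

end T

-- relator images vanish in the quotient
lemma mk_rel₁ (f₁ f₂ f₃ : F3) : RingQuot.mkAlgHom ℂ (rel3 f₁ f₂ f₃) f₁ = 0 := by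
  have := RingQuot.mkAlgHom_rel (s := rel3 f₁ f₂ f₃) ℂ ⟨Or.inl rfl, rfl⟩
  simpa using this

lemma mk_rel₂ (f₁ f₂ f₃ : F3) : RingQuot.mkAlgHom ℂ (rel3 f₁ f₂ f₃) f₂ = 0 := by
  have := RingQuot.mkAlgHom_rel (s := rel3 f₁ f₂ f₃) ℂ ⟨Or.inr (Or.inl rfl), rfl⟩
  simpa using this

lemma mk_rel₃ (f₁ f₂ f₃ : F3) : RingQuot.mkAlgHom ℂ (rel3 f₁ f₂ f₃) f₃ = 0 := by
  have := RingQuot.mkAlgHom_rel (s := rel3 f₁ f₂ f₃) ℂ ⟨Or.inr (Or.inr rfl), rfl⟩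
  simpa using this

/-- Lift an algebra map killing the relators to the quotient. -/
def liftQ {A : Type} [Semiring A] [Algebra ℂ A] (f₁ f₂ f₃ : F3) (F : F3 →ₐ[ℂ] A)
    (h1 : F f₁ = 0) (h2 : F f₂ = 0) (h3 : F f₃ = 0) : QuadAlg f₁ f₂ f₃ →ₐ[ℂ] A :=
  RingQuot.liftAlgHom ℂ ⟨F, by
    rintro x y ⟨(rfl | rfl | rfl), rfl⟩ <;> simp [h1, h2, h3]⟩

lemma liftQ_mk {A : Type} [Semiring A] [Algebra ℂ A] (f₁ f₂ f₃ : F3) (F : F3 →ₐ[ℂ] A)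
    (h1 : F f₁ = 0) (h2 : F f₂ = 0) (h3 : F f₃ = 0) (a : F3) :
    liftQ f₁ f₂ f₃ F h1 h2 h3 (RingQuot.mkAlgHom ℂ (rel3 f₁ f₂ f₃) a) = F a :=
  RingQuot.liftAlgHom_mkAlgHom_apply _ _ _ _

-- generators of T
def gen (p : ℂ) (j : Fin 3) : T p := T.mk' 0 (fun i => if i = j then 1 else 0) 0

def ψa (p : ℂ) : F3 →ₐ[ℂ] T p := FreeAlgebra.lift ℂ (gen p)

@[simp] lemma ψa_X (p : ℂ) : ψa p X = gen p 0 := FreeAlgebra.lift_ι_apply _ _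
@[simp] lemma ψa_Y (p : ℂ) : ψa p Y = gen p 1 := FreeAlgebra.lift_ι_apply _ _
@[simp] lemma ψa_Z (p : ℂ) : ψa p Z = gen p 2 := FreeAlgebra.lift_ι_apply _ _

lemma gen_mul (p : ℂ) (i j : Fin 3) :
    gen p i * gen p j =
      T.mk' 0 0 (qm p (fun k => if k = i then 1 else 0) (fun k => if k = j then 1 else 0)) := by
  refine T.ext ?_ ?_ ?_ <;> simp [gen]

lemma ψa_rel₁ (p : ℂ) (hp : p ≠ 0) : ψa p (X*Y - p • (Y*X)) = 0 := by
  simp only [map_sub, map_smul, map_mul, ψa_X, ψa_Y, gen_mul]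
  refine T.ext ?_ ?_ ?_
  · simp
  · simp
  · simp only [T.quad_sub, T.quad_smul, T.quad_mk', T.quad_zero]
    funext j
    fin_cases j <;> simp [qm] <;> field_simp <;> ring

lemma ψa_rel₂ (p : ℂ) (hp : p ≠ 0) : ψa p (X*Z - p⁻¹ • (Z*X)) = 0 := by
  simp only [map_sub, map_smul, map_mul, ψa_X, ψa_Z, gen_mul]
  refine T.ext ?_ ?_ ?_
  · simp
  · simp
  · simp only [T.quad_sub, T.quad_smul, T.quad_mk', T.quad_zero]
    funext j
    fin_cases j <;> simp [qm] <;> field_simp <;> ring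

lemma ψa_rel₃ (p : ℂ) (hp : p ≠ 0) : ψa p (p⁻¹ • (Z*Y) - p • (Y*Z) + X*X) = 0 := by
  simp only [map_add, map_sub, map_smul, map_mul, ψa_X, ψa_Y, ψa_Z, gen_mul]
  refine T.ext ?_ ?_ ?_
  · simp
  · simp
  · simp only [T.quad_add, T.quad_sub, T.quad_smul, T.quad_mk', T.quad_zero]
    funext j
    fin_cases j <;> simp [qm] <;> field_simp

/-- The truncation map on the quotient algebra with parameter `p`. -/
def Ψ (p : ℂ) (hp : p ≠ 0) :
    QuadAlg (X*Y - p • (Y*X)) (X*Z - p⁻¹ • (Z*X)) (p⁻¹ • (Z*Y) - p • (Y*Z) + X*X) →ₐ[ℂ] T p :=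
  liftQ _ _ _ (ψa p) (ψa_rel₁ p hp) (ψa_rel₂ p hp) (ψa_rel₃ p hp)

lemma Ψ_mk (p : ℂ) (hp : p ≠ 0) (a : F3) :
    Ψ p hp (RingQuot.mkAlgHom ℂ _ a) = ψa p a := liftQ_mk _ _ _ _ _ _ _ _

section Backward
open Complex

abbrev Qa (p : ℂ) : Type :=
  QuadAlg (X*Y - p • (Y*X)) (X*Z - p⁻¹ • (Z*X)) (p⁻¹ • (Z*Y) - p • (Y*Z) + X*X)

def mkQ (p : ℂ) : F3 →ₐ[ℂ] Qa p := RingQuot.mkAlgHom ℂ _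

lemma q_xy (p : ℂ) : mkQ p X * mkQ p Y = p • (mkQ p Y * mkQ p X) := by
  have := mk_rel₁ (X*Y - p • (Y*X)) (X*Z - p⁻¹ • (Z*X)) (p⁻¹ • (Z*Y) - p • (Y*Z) + X*X)
  rw [map_sub, map_smul, map_mul, map_mul, sub_eq_zero] at this
  exact this

lemma q_xz (p : ℂ) : mkQ p X * mkQ p Z = p⁻¹ • (mkQ p Z * mkQ p X) := by
  have := mk_rel₂ (X*Y - p • (Y*X)) (X*Z - p⁻¹ • (Z*X)) (p⁻¹ • (Z*Y) - p • (Y*Z) + X*X)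
  rw [map_sub, map_smul, map_mul, map_mul, sub_eq_zero] at this
  exact this

lemma q_r3 (p : ℂ) :
    p⁻¹ • (mkQ p Z * mkQ p Y) - p • (mkQ p Y * mkQ p Z) + mkQ p X * mkQ p X = 0 := by
  have := mk_rel₃ (X*Y - p • (Y*X)) (X*Z - p⁻¹ • (Z*X)) (p⁻¹ • (Z*Y) - p • (Y*Z) + X*X)
  rw [map_add, map_sub, map_smul, map_smul, map_mul, map_mul, map_mul] at this
  exact this

lemma q_xx (p : ℂ) :
    mkQ p X * mkQ p X = p • (mkQ p Y * mkQ p Z) - p⁻¹ • (mkQ p Z * mkQ p Y) := by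
  linear_combination (norm := module) q_r3 p

/-- generator images for the iso `Qa p → Qa p⁻¹` : `x ↦ i x`, `y ↦ z`, `z ↦ y`. -/
def φhom (p : ℂ) : F3 →ₐ[ℂ] Qa p⁻¹ :=
  FreeAlgebra.lift ℂ ![I • mkQ p⁻¹ X, mkQ p⁻¹ Z, mkQ p⁻¹ Y]

@[simp] lemma φhom_X (p : ℂ) : φhom p X = I • mkQ p⁻¹ X := FreeAlgebra.lift_ι_apply _ _
@[simp] lemma φhom_Y (p : ℂ) : φhom p Y = mkQ p⁻¹ Z := FreeAlgebra.lift_ι_apply _ _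
@[simp] lemma φhom_Z (p : ℂ) : φhom p Z = mkQ p⁻¹ Y := FreeAlgebra.lift_ι_apply _ _

lemma φhom_r1 (p : ℂ) : φhom p (X*Y - p • (Y*X)) = 0 := by
  simp only [map_sub, map_smul, map_mul, φhom_X, φhom_Y, smul_mul_assoc, mul_smul_comm]
  rw [q_xz p⁻¹]
  match_scalars
  simp only [inv_inv]
  ring

lemma φhom_r2 (p : ℂ) : φhom p (X*Z - p⁻¹ • (Z*X)) = 0 := by
  simp only [map_sub, map_smul, map_mul, φhom_X, φhom_Z, smul_mul_assoc, mul_smul_comm]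
  rw [q_xy p⁻¹]
  match_scalars
  ring

lemma φhom_r3 (p : ℂ) : φhom p (p⁻¹ • (Z*Y) - p • (Y*Z) + X*X) = 0 := by
  simp only [map_add, map_sub, map_smul, map_mul, φhom_X, φhom_Y, φhom_Z,
    smul_mul_assoc, mul_smul_comm]
  rw [q_xx p⁻¹]
  match_scalars <;> (try ring_nf) <;> (try simp only [Complex.I_sq, inv_inv]) <;> (try ring)

/-- generator images for the iso `Qa p⁻¹ → Qa p` : `x ↦ -i x`, `y ↦ z`, `z ↦ y`. -/
def χhom (p : ℂ) : F3 →ₐ[ℂ] Qa p :=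
  FreeAlgebra.lift ℂ ![(-I : ℂ) • mkQ p X, mkQ p Z, mkQ p Y]

@[simp] lemma χhom_X (p : ℂ) : χhom p X = (-I : ℂ) • mkQ p X := FreeAlgebra.lift_ι_apply _ _
@[simp] lemma χhom_Y (p : ℂ) : χhom p Y = mkQ p Z := FreeAlgebra.lift_ι_apply _ _
@[simp] lemma χhom_Z (p : ℂ) : χhom p Z = mkQ p Y := FreeAlgebra.lift_ι_apply _ _

lemma χhom_r1 (p : ℂ) : χhom p (X*Y - p⁻¹ • (Y*X)) = 0 := by
  simp only [map_sub, map_smul, map_mul, χhom_X, χhom_Y, smul_mul_assoc, mul_smul_comm,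
    neg_mul, mul_neg, neg_smul, smul_neg]
  rw [q_xz p]
  match_scalars
  ring

lemma χhom_r2 (p : ℂ) : χhom p (X*Z - p⁻¹⁻¹ • (Z*X)) = 0 := by
  simp only [map_sub, map_smul, map_mul, χhom_X, χhom_Z, smul_mul_assoc, mul_smul_comm,
    neg_mul, mul_neg, neg_smul, smul_neg]
  rw [q_xy p]
  match_scalars
  simp only [inv_inv]
  ring

lemma χhom_r3 (p : ℂ) : χhom p (p⁻¹⁻¹ • (Z*Y) - p⁻¹ • (Y*Z) + X*X) = 0 := by
  simp only [map_add, map_sub, map_smul, map_mul, χhom_X, χhom_Y, χhom_Z,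
    smul_mul_assoc, mul_smul_comm, neg_mul, mul_neg, neg_neg, neg_smul, smul_neg]
  rw [q_xx p]
  match_scalars <;> (try ring_nf) <;> (try simp only [Complex.I_sq, inv_inv]) <;> (try ring)

/-- The algebra maps between `Qa p` and `Qa p⁻¹`. -/
def toInv (p : ℂ) : Qa p →ₐ[ℂ] Qa p⁻¹ :=
  liftQ _ _ _ (φhom p) (φhom_r1 p) (φhom_r2 p) (φhom_r3 p)

def fromInv (p : ℂ) : Qa p⁻¹ →ₐ[ℂ] Qa p :=
  liftQ _ _ _ (χhom p) (χhom_r1 p) (χhom_r2 p) (χhom_r3 p)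

lemma toInv_mk (p : ℂ) (a : F3) :
    toInv p (mkQ p a) = φhom p a := liftQ_mk _ _ _ _ _ _ _ _

lemma fromInv_mk (p : ℂ) (a : F3) :
    fromInv p (mkQ p⁻¹ a) = χhom p a := liftQ_mk _ _ _ _ _ _ _ _

/-- The graded iso `Qa p ≃ Qa p⁻¹`. -/
def invEquiv (p : ℂ) : Qa p ≃ₐ[ℂ] Qa p⁻¹ := by
  refine AlgEquiv.ofAlgHom (toInv p) (fromInv p) ?_ ?_
  · refine RingQuot.ringQuot_ext' ℂ _ _ (FreeAlgebra.hom_ext (funext fun j => ?_))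
    fin_cases j
    · show toInv p (fromInv p (mkQ p⁻¹ X)) = mkQ p⁻¹ X
      rw [fromInv_mk, χhom_X, map_smul, toInv_mk, φhom_X, smul_smul]
      simp
    · show toInv p (fromInv p (mkQ p⁻¹ Y)) = mkQ p⁻¹ Y
      rw [fromInv_mk, χhom_Y, toInv_mk, φhom_Z]
    · show toInv p (fromInv p (mkQ p⁻¹ Z)) = mkQ p⁻¹ Z
      rw [fromInv_mk, χhom_Z, toInv_mk, φhom_Y]
  · refine RingQuot.ringQuot_ext' ℂ _ _ (FreeAlgebra.hom_ext (funext fun j => ?_))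
    fin_cases j
    · show fromInv p (toInv p (mkQ p X)) = mkQ p X
      rw [toInv_mk, φhom_X, map_smul, fromInv_mk, χhom_X, smul_smul]
      simp
    · show fromInv p (toInv p (mkQ p Y)) = mkQ p Y
      rw [toInv_mk, φhom_Y, fromInv_mk, χhom_Z]
    · show fromInv p (toInv p (mkQ p Z)) = mkQ p Z
      rw [toInv_mk, φhom_Z, fromInv_mk, χhom_Y]

lemma invEquiv_apply (p : ℂ) (a : Qa p) : invEquiv p a = toInv p a := rfl

lemma invEquiv_span (p : ℂ) :
    Submodule.map (invEquiv p).toLinearMap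
      (genSpan (X*Y - p • (Y*X)) (X*Z - p⁻¹ • (Z*X)) (p⁻¹ • (Z*Y) - p • (Y*Z) + X*X))
    = genSpan (X*Y - p⁻¹ • (Y*X)) (X*Z - p⁻¹⁻¹ • (Z*X)) (p⁻¹⁻¹ • (Z*Y) - p⁻¹ • (Y*Z) + X*X) := by
  have himg : (invEquiv p).toLinearMap ''
      {RingQuot.mkAlgHom ℂ _ X, RingQuot.mkAlgHom ℂ _ Y, RingQuot.mkAlgHom ℂ _ Z}
      = {I • mkQ p⁻¹ X, mkQ p⁻¹ Z, mkQ p⁻¹ Y} := by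
    rw [Set.image_insert_eq, Set.image_insert_eq, Set.image_singleton]
    have h1 : (invEquiv p).toLinearMap (mkQ p X) = I • mkQ p⁻¹ X := by
      show invEquiv p (mkQ p X) = _
      rw [invEquiv_apply, toInv_mk, φhom_X]
    have h2 : (invEquiv p).toLinearMap (mkQ p Y) = mkQ p⁻¹ Z := by
      show invEquiv p (mkQ p Y) = _
      rw [invEquiv_apply, toInv_mk, φhom_Y]
    have h3 : (invEquiv p).toLinearMap (mkQ p Z) = mkQ p⁻¹ Y := by
      show invEquiv p (mkQ p Z) = _
      rw [invEquiv_apply, toInv_mk, φhom_Z]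
    rw [show RingQuot.mkAlgHom ℂ (rel3 (X*Y - p • (Y*X)) (X*Z - p⁻¹ • (Z*X))
      (p⁻¹ • (Z*Y) - p • (Y*Z) + X*X)) = mkQ p from rfl, h1, h2, h3]
  rw [genSpan, Submodule.map_span, himg, genSpan,
    show (RingQuot.mkAlgHom ℂ (rel3 (X*Y - p⁻¹ • (Y*X)) (X*Z - p⁻¹⁻¹ • (Z*X))
      (p⁻¹⁻¹ • (Z*Y) - p⁻¹ • (Y*Z) + X*X))) = mkQ p⁻¹ from rfl]
  refine Submodule.span_eq_span ?_ ?_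
  · rintro t ht
    simp only [Set.mem_insert_iff, Set.mem_singleton_iff] at ht
    rcases ht with rfl | rfl | rfl
    · exact Submodule.smul_mem _ _ (Submodule.subset_span (by simp))
    · exact Submodule.subset_span (by simp)
    · exact Submodule.subset_span (by simp)
  · rintro t ht
    simp only [Set.mem_insert_iff, Set.mem_singleton_iff] at ht
    rcases ht with rfl | rfl | rfl
    · have hmem : (-I) • (I • mkQ p⁻¹ X) ∈
          Submodule.span ℂ {I • mkQ p⁻¹ X, mkQ p⁻¹ Z, mkQ p⁻¹ Y} :=
        Submodule.smul_mem _ _ (Submodule.subset_span (by simp))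
      simpa [smul_smul] using hmem
    · exact Submodule.subset_span (by simp)
    · exact Submodule.subset_span (by simp)

end Backward

section Forward
open Complex

lemma scalar_key (α α' : ℂ) (hα : α ≠ 0) (hα' : α' ≠ 0) (h1 : α' ≠ α) (h2 : α' ≠ α⁻¹)
    (u v w : Fin 3 → ℂ)
    (hA : qm α' u v = α • qm α' v u)
    (hB : qm α' u w = α⁻¹ • qm α' w u)
    (hC : α⁻¹ • qm α' w v - α • qm α' v w + qm α' u u = 0) :
    u 1 = 0 ∧ u 2 = 0 ∧ (u 0 ≠ 0 → v 1 = 0 ∧ v 2 = 0 ∧ w 1 = 0 ∧ w 2 = 0) := by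
  have hαα' : α * α' ≠ 1 := fun hc => h2 (by field_simp; linear_combination hc)
  have hαα'2 : α' - α ≠ 0 := sub_ne_zero.mpr h1
  have A0 := congrFun hA 0
  have A1 := congrFun hA 1
  have A2 := congrFun hA 2
  have A5 := congrFun hA 5
  have B0 := congrFun hB 0
  have B1 := congrFun hB 1
  have B2 := congrFun hB 2
  have B5 := congrFun hB 5
  have C2 := congrFun hC 2
  have C5 := congrFun hC 5
  simp only [qm, Pi.smul_apply, Pi.sub_apply, Pi.add_apply, Pi.zero_apply,
    smul_eq_mul] at A0 A1 A2 A5 B0 B1 B2 B5 C2 C5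
  -- u 1 = 0
  have hu1 : u 1 = 0 := by
    by_cases hone : α = 1
    · subst hone
      have : u 1 * u 1 = 0 := by linear_combination C2
      exact mul_self_eq_zero.mp this
    · have huv : u 1 * v 1 = 0 := by
        have hz : u 1 * v 1 * (1 - α) = 0 := by linear_combination A2
        exact (mul_eq_zero.mp hz).resolve_right (sub_ne_zero.mpr (Ne.symm hone))
      rcases mul_eq_zero.mp huv with h | h
      · exact h
      · have : u 1 * u 1 = 0 := by linear_combination C2 + (α - α⁻¹) * w 1 * h
        exact mul_self_eq_zero.mp this
  have hu2 : u 2 = 0 := by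
    by_cases hone : α = 1
    · subst hone
      have : u 2 * u 2 = 0 := by linear_combination C5
      exact mul_self_eq_zero.mp this
    · have huv : u 2 * v 2 = 0 := by
        have hz : u 2 * v 2 * (1 - α) = 0 := by linear_combination A5
        exact (mul_eq_zero.mp hz).resolve_right (sub_ne_zero.mpr (Ne.symm hone))
      rcases mul_eq_zero.mp huv with h | h
      · exact h
      · have : u 2 * u 2 = 0 := by linear_combination C5 + (α - α⁻¹) * w 2 * h
        exact mul_self_eq_zero.mp this
  refine ⟨hu1, hu2, fun hu0 => ?_⟩
  have hinv' : α' * α'⁻¹ = 1 := mul_inv_cancel₀ hα'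
  have hinvα : α * α⁻¹ = 1 := mul_inv_cancel₀ hα
  have hαα'3 : (1 : ℂ) - α * α' ≠ 0 := by
    intro hc
    exact hαα' (by linear_combination -hc)
  have hv1 : v 1 = 0 := by
    have hz : v 1 * (u 0 * (α' - α)) = 0 := by
      linear_combination α' * A0 + α * (v 1 * u 0) * hinv' + (α * α' - α' * α'⁻¹) * v 0 * hu1
    exact (mul_eq_zero.mp hz).resolve_right (mul_ne_zero hu0 hαα'2)
  have hv2 : v 2 = 0 := by
    have hz : v 2 * (u 0 * (1 - α * α')) = 0 := by
      linear_combination A1 + (α - α') * v 0 * hu2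
    exact (mul_eq_zero.mp hz).resolve_right (mul_ne_zero hu0 hαα'3)
  have hw1 : w 1 = 0 := by
    have hz : w 1 * (u 0 * (α * α' - 1)) = 0 := by
      linear_combination (α * α') * B0 + (α * α' * (α⁻¹ - α'⁻¹) * w 0) * hu1
        + (w 1 * u 0 * α' * α'⁻¹) * hinvα + (w 1 * u 0) * hinv'
    refine (mul_eq_zero.mp hz).resolve_right (mul_ne_zero hu0 ?_)
    intro hc
    exact hαα' (by linear_combination hc)
  have hw2 : w 2 = 0 := by
    have hz : w 2 * (u 0 * (α - α')) = 0 := by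
      linear_combination α * B1 + (α' * w 2 * u 0) * hinvα + (α * α⁻¹ - α * α') * w 0 * hu2
    refine (mul_eq_zero.mp hz).resolve_right (mul_ne_zero hu0 ?_)
    intro hc
    exact hαα'2 (by linear_combination -hc)
  exact ⟨hv1, hv2, hw1, hw2⟩

-- `Ψ` on generators
lemma Ψ_mk_X (p : ℂ) (hp : p ≠ 0) : Ψ p hp (mkQ p X) = gen p 0 := by
  rw [show mkQ p X = RingQuot.mkAlgHom ℂ _ X from rfl, Ψ_mk]; simp

lemma Ψ_mk_Y (p : ℂ) (hp : p ≠ 0) : Ψ p hp (mkQ p Y) = gen p 1 := by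
  rw [show mkQ p Y = RingQuot.mkAlgHom ℂ _ Y from rfl, Ψ_mk]; simp

lemma Ψ_mk_Z (p : ℂ) (hp : p ≠ 0) : Ψ p hp (mkQ p Z) = gen p 2 := by
  rw [show mkQ p Z = RingQuot.mkAlgHom ℂ _ Z from rfl, Ψ_mk]; simp

def gSp (p : ℂ) : Submodule ℂ (Qa p) :=
  genSpan (X*Y - p • (Y*X)) (X*Z - p⁻¹ • (Z*X)) (p⁻¹ • (Z*Y) - p • (Y*Z) + X*X)

lemma gSp_eq (p : ℂ) : gSp p = Submodule.span ℂ {mkQ p X, mkQ p Y, mkQ p Z} := rfl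

lemma mem_gSp_X (p : ℂ) : mkQ p X ∈ gSp p := by
  rw [gSp_eq]; exact Submodule.subset_span (by simp)
lemma mem_gSp_Y (p : ℂ) : mkQ p Y ∈ gSp p := by
  rw [gSp_eq]; exact Submodule.subset_span (by simp)
lemma mem_gSp_Z (p : ℂ) : mkQ p Z ∈ gSp p := by
  rw [gSp_eq]; exact Submodule.subset_span (by simp)

/-- On the span of generators, `Ψ` has zero constant and quadratic part. -/
lemma Ψ_gSp_con_quad (p : ℂ) (hp : p ≠ 0) {t : Qa p} (ht : t ∈ gSp p) :
    T.con (Ψ p hp t) = 0 ∧ T.quad (Ψ p hp t) = 0 := by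
  rw [gSp_eq] at ht
  induction ht using Submodule.span_induction with
  | mem x hx =>
    rcases hx with rfl | rfl | rfl
    · rw [Ψ_mk_X]; exact ⟨rfl, rfl⟩
    · rw [Ψ_mk_Y]; exact ⟨rfl, rfl⟩
    · rw [Ψ_mk_Z]; exact ⟨rfl, rfl⟩
  | zero => simp
  | add x y _ _ hx hy => rw [map_add]; constructor <;> simp [hx.1, hy.1, hx.2, hy.2]
  | smul c x _ hx => rw [map_smul]; constructor <;> simp [hx.1, hx.2]

/-- Retraction of `Ψ` on the generator span. -/
def ρ (p : ℂ) : T p →ₗ[ℂ] Qa p where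
  toFun t := T.lin t 0 • mkQ p X + T.lin t 1 • mkQ p Y + T.lin t 2 • mkQ p Z
  map_add' s t := by simp [add_smul]; module
  map_smul' c t := by simp [mul_smul, smul_add]

lemma ρ_apply (p : ℂ) (t : T p) :
    ρ p t = T.lin t 0 • mkQ p X + T.lin t 1 • mkQ p Y + T.lin t 2 • mkQ p Z := rfl

lemma ρ_Ψ (p : ℂ) (hp : p ≠ 0) {t : Qa p} (ht : t ∈ gSp p) :
    ρ p (Ψ p hp t) = t := by
  rw [gSp_eq] at ht
  induction ht using Submodule.span_induction with
  | mem x hx =>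
    rcases hx with rfl | rfl | rfl
    · rw [Ψ_mk_X]; simp [ρ_apply, gen]
    · rw [Ψ_mk_Y]; simp [ρ_apply, gen]
    · rw [Ψ_mk_Z]; simp [ρ_apply, gen]
  | zero => simp
  | add x y _ _ hx hy => rw [map_add, map_add, hx, hy]
  | smul c x _ hx => rw [map_smul, map_smul, hx]

/-- linear functional extracting the `y`-coordinate in degree one. -/
def lam (p : ℂ) : T p →ₗ[ℂ] ℂ where
  toFun t := T.lin t 1
  map_add' s t := by simp
  map_smul' c t := by simp

lemma lam_apply (p : ℂ) (t : T p) : lam p t = T.lin t 1 := rfl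

lemma mid_mul (p : ℂ) (u v : Fin 3 → ℂ) :
    (T.mk' 0 u 0 : T p) * T.mk' 0 v 0 = T.mk' 0 0 (qm p u v) := by
  refine T.ext ?_ ?_ ?_ <;> simp

end Forward

theorem typeTL1_iso_iff
    (α α' : ℂ)
    (h : α ≠ 0)
    (h' : α' ≠ 0)
    : GrIso
      (X*Y - α • (Y*X))
      (X*Z - α⁻¹ • (Z*X))
      (α⁻¹ • (Z*Y) - α • (Y*Z) + X*X)
      (X*Y - α' • (Y*X))
      (X*Z - α'⁻¹ • (Z*X))
      (α'⁻¹ • (Z*Y) - α' • (Y*Z) + X*X)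
      ↔
      (α' = α ∨ α' = α⁻¹) := by
  constructor
  · intro hG
    obtain ⟨e, he⟩ := hG
    by_contra hcon
    push_neg at hcon
    obtain ⟨hne1, hne2⟩ := hcon
    set Φ : F3 →ₐ[ℂ] T α' := (Ψ α' h').comp (e.toAlgHom.comp (mkQ α)) with hΦdef
    have he' : Submodule.map e.toLinearMap (gSp α) = gSp α' := he
    -- the images of the generators lie in the span of the generators
    have heX : e (mkQ α X) ∈ gSp α' := by
      rw [← he']; exact Submodule.mem_map_of_mem (mem_gSp_X α)
    have heY : e (mkQ α Y) ∈ gSp α' := by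
      rw [← he']; exact Submodule.mem_map_of_mem (mem_gSp_Y α)
    have heZ : e (mkQ α Z) ∈ gSp α' := by
      rw [← he']; exact Submodule.mem_map_of_mem (mem_gSp_Z α)
    have hΦX : Φ X = Ψ α' h' (e (mkQ α X)) := rfl
    have hΦY : Φ Y = Ψ α' h' (e (mkQ α Y)) := rfl
    have hΦZ : Φ Z = Ψ α' h' (e (mkQ α Z)) := rfl
    set u := T.lin (Φ X) with hu
    set v := T.lin (Φ Y) with hv
    set w := T.lin (Φ Z) with hw
    have hcqX := Ψ_gSp_con_quad α' h' heX
    have hcqY := Ψ_gSp_con_quad α' h' heY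
    have hcqZ := Ψ_gSp_con_quad α' h' heZ
    have hX3 : Φ X = T.mk' 0 u 0 := by
      refine T.ext ?_ ?_ ?_
      · rw [hΦX]; exact hcqX.1
      · rfl
      · rw [hΦX]; exact hcqX.2
    have hY3 : Φ Y = T.mk' 0 v 0 := by
      refine T.ext ?_ ?_ ?_
      · rw [hΦY]; exact hcqY.1
      · rfl
      · rw [hΦY]; exact hcqY.2
    have hZ3 : Φ Z = T.mk' 0 w 0 := by
      refine T.ext ?_ ?_ ?_
      · rw [hΦZ]; exact hcqZ.1
      · rfl
      · rw [hΦZ]; exact hcqZ.2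
    -- relator equations
    have hf1 : Φ (X*Y - α • (Y*X)) = 0 := by
      rw [hΦdef, AlgHom.comp_apply, AlgHom.comp_apply,
        show mkQ α (X*Y - α • (Y*X)) = 0 from mk_rel₁ _ _ _, map_zero, map_zero]
    have hf2 : Φ (X*Z - α⁻¹ • (Z*X)) = 0 := by
      rw [hΦdef, AlgHom.comp_apply, AlgHom.comp_apply,
        show mkQ α (X*Z - α⁻¹ • (Z*X)) = 0 from mk_rel₂ _ _ _, map_zero, map_zero]
    have hf3 : Φ (α⁻¹ • (Z*Y) - α • (Y*Z) + X*X) = 0 := by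
      rw [hΦdef, AlgHom.comp_apply, AlgHom.comp_apply,
        show mkQ α (α⁻¹ • (Z*Y) - α • (Y*Z) + X*X) = 0 from mk_rel₃ _ _ _, map_zero, map_zero]
    have hA : qm α' u v = α • qm α' v u := by
      rw [map_sub, map_smul, map_mul, map_mul, hX3, hY3, mid_mul, mid_mul] at hf1
      have hq := congrArg T.quad hf1
      simp only [T.quad_sub, T.quad_smul, T.quad_mk', T.quad_zero] at hq
      exact sub_eq_zero.mp hq
    have hB : qm α' u w = α⁻¹ • qm α' w u := by
      rw [map_sub, map_smul, map_mul, map_mul, hX3, hZ3, mid_mul, mid_mul] at hf2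
      have hq := congrArg T.quad hf2
      simp only [T.quad_sub, T.quad_smul, T.quad_mk', T.quad_zero] at hq
      exact sub_eq_zero.mp hq
    have hC : α⁻¹ • qm α' w v - α • qm α' v w + qm α' u u = 0 := by
      rw [map_add, map_sub, map_smul, map_smul, map_mul, map_mul, map_mul,
        hX3, hY3, hZ3, mid_mul, mid_mul, mid_mul] at hf3
      have hq := congrArg T.quad hf3
      simp only [T.quad_add, T.quad_sub, T.quad_smul, T.quad_mk', T.quad_zero] at hq
      exact hq
    obtain ⟨hu1, hu2, hrest⟩ := scalar_key α α' h h' hne1 hne2 u v w hA hB hC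
    have hu0 : u 0 ≠ 0 := by
      intro h0
      have huz : u = 0 := by
        funext i
        fin_cases i
        · exact h0
        · exact hu1
        · exact hu2
      have hX0 : Φ X = 0 := by
        rw [hX3, huz]
        exact T.ext (by simp) (by simp) (by simp)
      have heq : e (mkQ α X) = 0 := by
        have hr := ρ_Ψ α' h' heX
        rw [← hΦX, hX0, map_zero] at hr
        exact hr.symm
      have hmk0 : mkQ α X = 0 := by
        apply e.injective
        rw [heq, map_zero]
      have hbad := Ψ_mk_X α h
      rw [hmk0, map_zero] at hbad
      have hbad2 := congrFun (congrArg T.lin hbad) 0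
      simp [gen] at hbad2
    obtain ⟨hv1, hv2, hw1, hw2⟩ := hrest hu0
    -- final contradiction via the functional `lam`
    have hc1 : ((Ψ α' h').toLinearMap ∘ₗ e.toLinearMap) (mkQ α X) = Φ X := rfl
    have hc2 : ((Ψ α' h').toLinearMap ∘ₗ e.toLinearMap) (mkQ α Y) = Φ Y := rfl
    have hc3 : ((Ψ α' h').toLinearMap ∘ₗ e.toLinearMap) (mkQ α Z) = Φ Z := rfl
    have hmap : Submodule.map (Ψ α' h').toLinearMap (gSp α') =
        Submodule.span ℂ {Φ X, Φ Y, Φ Z} := by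
      conv_lhs => rw [← he']
      rw [← Submodule.map_comp, gSp_eq, Submodule.map_span,
        Set.image_insert_eq, Set.image_insert_eq, Set.image_singleton, hc1, hc2, hc3]
    have hYmem : Ψ α' h' (mkQ α' Y) ∈ Submodule.span ℂ {Φ X, Φ Y, Φ Z} := by
      rw [← hmap]
      exact Submodule.mem_map_of_mem (mem_gSp_Y α')
    have hle : Submodule.span ℂ {Φ X, Φ Y, Φ Z} ≤ LinearMap.ker (lam α') := by
      rw [Submodule.span_le]
      rintro t ht
      simp only [Set.mem_insert_iff, Set.mem_singleton_iff] at ht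
      rcases ht with rfl | rfl | rfl
      · simp [LinearMap.mem_ker, lam_apply, hX3, hu1]
      · simp [LinearMap.mem_ker, lam_apply, hY3, hv1]
      · simp [LinearMap.mem_ker, lam_apply, hZ3, hw1]
    have hker := hle hYmem
    rw [LinearMap.mem_ker, Ψ_mk_Y] at hker
    simp [lam_apply, gen] at hker
  · rintro (rfl | rfl)
    · refine ⟨AlgEquiv.refl, ?_⟩
      have hid : (AlgEquiv.refl : Qa α' ≃ₐ[ℂ] Qa α').toLinearMap = LinearMap.id := rfl
      rw [hid, Submodule.map_id]
    · exact ⟨invEquiv α, invEquiv_span α⟩
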